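/- Suppose a, b are non-positive integers, d is a positive integer, γ = a/d, δ = b/d, q ≥ 2 is a real number, and c is a real number with c > 2q/(q−1) − δ/(q−1) − qγ/(q−1). Define f₁(β) = β^β − β^(β(γ−1))·((1/q)·β^(βδ) + ((q−1)/q)·β^(βc)) for 0 < β < 1. If 0 < Δ < Δ̂ ≤ 1/e, f₁(Δ) ≥ 0, and f₁(Δ̂) < 0, then f₁(β) ≥ 0 for all β with 0 < β ≤ Δ. -/

import Mathlib

set_option maxHeartbeats 1000000 in
theorem stmt_14 (a b : ℤ) (d : ℕ) (ha : a ≤ 0) (hb : b ≤ 0) (hd : 0 < d)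
    (q c γ δ : ℝ) (hq : 2 ≤ q)
    (hγ : γ = (a : ℝ) / d) (hδ : δ = (b : ℝ) / d)
    (hc : c > 2 * q / (q - 1) - δ / (q - 1) - q * γ / (q - 1))
    (f₁ : ℝ → ℝ)
    (hf : ∀ β : ℝ, f₁ β =
      β ^ β - β ^ (β * (γ - 1)) *
        ((1 / q) * β ^ (β * δ) + ((q - 1) / q) * β ^ (β * c)))
    (Δ Δ' : ℝ) (h1 : 0 < Δ) (h2 : Δ < Δ') (h3 : Δ' ≤ 1 / Real.exp 1)
    (h4 : 0 ≤ f₁ Δ) (h5 : f₁ Δ' < 0) :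
    ∀ β : ℝ, 0 < β → β ≤ Δ → 0 ≤ f₁ β := by
  subst hγ hδ
  have hq0 : (0:ℝ) < q := by linarith
  have hq1 : (1:ℝ) < q := by linarith
  have hd0 : (0:ℝ) < (d:ℝ) := by exact_mod_cast hd
  have hdne : (d:ℝ) ≠ 0 := hd0.ne'
  have haR : (a:ℝ) ≤ 0 := by exact_mod_cast ha
  have hbR : (b:ℝ) ≤ 0 := by exact_mod_cast hb
  have hγ0 : (a:ℝ)/d ≤ 0 := div_nonpos_of_nonpos_of_nonneg haR hd0.le
  have hδ0 : (b:ℝ)/d ≤ 0 := div_nonpos_of_nonpos_of_nonneg hbR hd0.le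
  set K : ℝ := (q-1)/q with hK
  have hK0 : 0 < K := div_pos (by linarith) hq0
  set A : ℝ := 2*(d:ℝ) - a - b with hA
  set B : ℝ := c*(d:ℝ) - b with hB
  have hd1 : (1:ℝ) ≤ (d:ℝ) := by exact_mod_cast hd
  have hA0 : 0 < A := by rw [hA]; linarith
  have hcγ : 2 - (a:ℝ)/d < c := by
    have e : 2*q/(q-1) - (b:ℝ)/d/(q-1) - q*((a:ℝ)/d)/(q-1)
        = (2*q - (b:ℝ)/d - q*((a:ℝ)/d))/(q-1) := by ring
    rw [e, gt_iff_lt, div_lt_iff₀ (by linarith : (0:ℝ) < q-1)] at hc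
    nlinarith
  have hdγ : (d:ℝ)*((a:ℝ)/d) = a := by field_simp
  have hBA : 0 < B - A := by
    have h := mul_pos hd0 (by linarith : (0:ℝ) < c - (2 - (a:ℝ)/d))
    rw [hA, hB]; nlinarith [hdγ]
  have hB0 : 0 < B := by linarith
  set g : ℝ → ℝ := fun y => y ^ A - K * y ^ B - 1/q with hg
  have hg1 : g 1 = 0 := by
    simp only [hg, Real.one_rpow, hK]
    field_simp
    ring
  have hderiv : ∀ z : ℝ, 0 < z →
      HasDerivAt g (z^(A-1) * (A - K*B*z^(B-A))) z := by
    intro z hz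
    have h1' : HasDerivAt (fun y : ℝ => y ^ A) (A * z^(A-1)) z :=
      Real.hasDerivAt_rpow_const (Or.inl hz.ne')
    have h2' : HasDerivAt (fun y : ℝ => y ^ B) (B * z^(B-1)) z :=
      Real.hasDerivAt_rpow_const (Or.inl hz.ne')
    have h := (h1'.sub (h2'.const_mul K)).sub_const (1/q)
    convert h using 1
    case e'_4 => rfl
    case e'_5 => rfl
    case e'_8 => rfl
    have hzz : z ^ (B-1) = z^(A-1) * z^(B-A) := by
      rw [← Real.rpow_add hz]; ring_nf
    rw [hzz]; ring
  set θ : ℝ := (A/(K*B)) ^ ((B-A)⁻¹) with hθ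
  have hq' : 0 < A/(K*B) := div_pos hA0 (mul_pos hK0 hB0)
  have hθ0 : 0 < θ := Real.rpow_pos_of_pos hq' _
  have hθpow : θ ^ (B-A) = A/(K*B) := by
    rw [hθ, ← Real.rpow_mul hq'.le, inv_mul_cancel₀ hBA.ne', Real.rpow_one]
  have hpos : ∀ z : ℝ, 0 < z → z < θ → 0 < z^(A-1) * (A - K*B*z^(B-A)) := by
    intro z hz hzθ
    have h1' : z^(B-A) < θ^(B-A) := Real.rpow_lt_rpow hz.le hzθ hBA
    rw [hθpow] at h1'
    have h2' : K*B*z^(B-A) < A := by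
      calc K*B*z^(B-A) < K*B*(A/(K*B)) :=
            mul_lt_mul_of_pos_left h1' (mul_pos hK0 hB0)
        _ = A := by field_simp
    exact mul_pos (Real.rpow_pos_of_pos hz _) (by linarith)
  have hneg : ∀ z : ℝ, θ < z → z^(A-1) * (A - K*B*z^(B-A)) < 0 := by
    intro z hzθ
    have hz : 0 < z := hθ0.trans hzθ
    have h1' : θ^(B-A) < z^(B-A) := Real.rpow_lt_rpow hθ0.le hzθ hBA
    rw [hθpow] at h1'
    have h2' : A < K*B*z^(B-A) := by
      calc A = K*B*(A/(K*B)) := by field_simp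
        _ < K*B*z^(B-A) := mul_lt_mul_of_pos_left h1' (mul_pos hK0 hB0)
    have hzp := Real.rpow_pos_of_pos hz (A-1)
    nlinarith
  have hgmin : ∀ w u : ℝ, 0 < w → w ≤ u → u ≤ 1 → 0 ≤ g w → 0 ≤ g u := by
    intro w u hw hwu hu1 hgw
    rcases le_total u θ with hcase | hcase
    · rcases eq_or_lt_of_le hwu with rfl | hwu'
      · exact hgw
      · have mono : StrictMonoOn g (Set.Icc w u) := by
          apply strictMonoOn_of_deriv_pos (convex_Icc w u)
          · exact fun z hz =>
              (hderiv z (lt_of_lt_of_le hw hz.1)).continuousAt.continuousWithinAt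
          · intro z hz
            rw [interior_Icc] at hz
            rw [(hderiv z (hw.trans hz.1)).deriv]
            exact hpos z (hw.trans hz.1) (lt_of_lt_of_le hz.2 hcase)
        have := mono (Set.left_mem_Icc.mpr hwu'.le) (Set.right_mem_Icc.mpr hwu'.le) hwu'
        linarith
    · rcases eq_or_lt_of_le hu1 with rfl | hu1'
      · exact hg1.ge
      · have hu0 : 0 < u := hw.trans_le hwu
        have anti : StrictAntiOn g (Set.Icc u 1) := by
          apply strictAntiOn_of_deriv_neg (convex_Icc u 1)
          · exact fun z hz =>
              (hderiv z (lt_of_lt_of_le hu0 hz.1)).continuousAt.continuousWithinAt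
          · intro z hz
            rw [interior_Icc] at hz
            rw [(hderiv z (hu0.trans hz.1)).deriv]
            exact hneg z (lt_of_le_of_lt hcase hz.1)
        have := anti (Set.left_mem_Icc.mpr hu1'.le) (Set.right_mem_Icc.mpr hu1'.le) hu1'
        rw [hg1] at this; linarith
  have key : ∀ x : ℝ, 0 < x →
      f₁ x = x ^ (x/(d:ℝ)*((a:ℝ)+b-(d:ℝ))) * g (x ^ (x/(d:ℝ))) := by
    intro x hx
    have e1 : f₁ x = x^x - (1/q)*x^(x*((a:ℝ)/d-1)+x*((b:ℝ)/d)) - K*x^(x*((a:ℝ)/d-1)+x*c) := by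
      rw [hf, Real.rpow_add hx, Real.rpow_add hx]; ring
    have e2 : x ^ (x/(d:ℝ)*((a:ℝ)+b-(d:ℝ))) * g (x ^ (x/(d:ℝ)))
        = x^(x/(d:ℝ)*((a:ℝ)+b-(d:ℝ)) + x/(d:ℝ)*A)
          - K*x^(x/(d:ℝ)*((a:ℝ)+b-(d:ℝ)) + x/(d:ℝ)*B)
          - (1/q)*x^(x/(d:ℝ)*((a:ℝ)+b-(d:ℝ))) := by
      simp only [hg]
      rw [← Real.rpow_mul hx.le, ← Real.rpow_mul hx.le,
        Real.rpow_add hx, Real.rpow_add hx]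
      ring
    have eA : x/(d:ℝ)*((a:ℝ)+b-(d:ℝ)) + x/(d:ℝ)*A = x := by
      rw [hA]
      have h : x/(d:ℝ)*((a:ℝ)+b-(d:ℝ)) + x/(d:ℝ)*(2*(d:ℝ)-a-b) = x/(d:ℝ)*(d:ℝ) := by
        ring
      rw [h, div_mul_cancel₀ x hdne]
    have eB : x/(d:ℝ)*((a:ℝ)+b-(d:ℝ)) + x/(d:ℝ)*B = x*((a:ℝ)/d-1)+x*c := by
      rw [hB]
      have h : x/(d:ℝ)*((a:ℝ)+b-(d:ℝ)) + x/(d:ℝ)*(c*(d:ℝ)-b)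
          = x*((a:ℝ)/d) - x/(d:ℝ)*(d:ℝ) + (x*c/(d:ℝ))*(d:ℝ) := by ring
      rw [h, div_mul_cancel₀ x hdne, div_mul_cancel₀ (x*c) hdne]
      ring
    have eC : x/(d:ℝ)*((a:ℝ)+b-(d:ℝ)) = x*((a:ℝ)/d-1)+x*((b:ℝ)/d) := by
      have h : x/(d:ℝ)*((a:ℝ)+b-(d:ℝ)) = x*((a:ℝ)/d) + x*((b:ℝ)/d) - x/(d:ℝ)*(d:ℝ) := by
        ring
      rw [h, div_mul_cancel₀ x hdne]
      ring
    rw [e1, e2, eA, eB, eC]; ring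
  intro β hβ0 hβΔ
  have hΔe : Δ < 1/Real.exp 1 := lt_of_lt_of_le h2 h3
  have hexp1 : (1:ℝ) < Real.exp 1 := by
    have := Real.exp_one_gt_d9; linarith
  have hβ1 : β < 1 := by
    have : 1/Real.exp 1 < 1 := by
      rw [div_lt_one (by positivity)]; exact hexp1
    linarith
  have hmono : Δ * Real.log Δ ≤ β * Real.log β := by
    rcases eq_or_lt_of_le hβΔ with rfl | hlt
    · exact le_refl _
    · have anti : StrictAntiOn (fun t : ℝ => t * Real.log t) (Set.Icc β Δ) := by
        apply strictAntiOn_of_deriv_neg (convex_Icc β Δ)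
        · exact fun z hz =>
            (Real.hasDerivAt_mul_log (lt_of_lt_of_le hβ0 hz.1).ne').continuousAt.continuousWithinAt
        · intro z hz
          rw [interior_Icc] at hz
          have hz0 : 0 < z := hβ0.trans hz.1
          rw [(Real.hasDerivAt_mul_log hz0.ne').deriv]
          have hze : z < Real.exp (-1) := by
            rw [Real.exp_neg]
            calc z < Δ := hz.2
              _ < 1/Real.exp 1 := hΔe
              _ = (Real.exp 1)⁻¹ := one_div _
          have := Real.log_lt_log hz0 hze
          rw [Real.log_exp] at this
          linarith
      exact (anti (Set.left_mem_Icc.mpr hlt.le) (Set.right_mem_Icc.mpr hlt.le) hlt).le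
  have hwu : Δ ^ (Δ/(d:ℝ)) ≤ β ^ (β/(d:ℝ)) := by
    rw [Real.rpow_def_of_pos h1, Real.rpow_def_of_pos hβ0]
    apply Real.exp_le_exp.mpr
    have h' : (Δ * Real.log Δ)/(d:ℝ) ≤ (β * Real.log β)/(d:ℝ) :=
      (div_le_div_iff_of_pos_right hd0).mpr hmono
    calc Real.log Δ * (Δ/(d:ℝ)) = (Δ * Real.log Δ)/(d:ℝ) := by ring
      _ ≤ (β * Real.log β)/(d:ℝ) := h'
      _ = Real.log β * (β/(d:ℝ)) := by ring
  have hu1 : β ^ (β/(d:ℝ)) ≤ 1 :=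
    Real.rpow_le_one hβ0.le hβ1.le (by positivity)
  have hyΔ0 : 0 < Δ ^ (Δ/(d:ℝ)) := Real.rpow_pos_of_pos h1 _
  have hgw : 0 ≤ g (Δ ^ (Δ/(d:ℝ))) := by
    have h4' := h4
    rw [key Δ h1] at h4'
    have hp : 0 < Δ ^ (Δ/(d:ℝ)*((a:ℝ)+b-(d:ℝ))) := Real.rpow_pos_of_pos h1 _
    by_contra hcon
    push_neg at hcon
    nlinarith [mul_neg_of_pos_of_neg hp hcon]
  have hgu : 0 ≤ g (β ^ (β/(d:ℝ))) := hgmin _ _ hyΔ0 hwu hu1 hgw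
  rw [key β hβ0]
  exact mul_nonneg (Real.rpow_pos_of_pos hβ0 _).le hgu
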